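/- arXiv:2012.03800 — 3 statements merged into one kernel-verified Lean document; each statement's English description precedes it below -/
import Mathlib

section
/- In the multiple-purchase model, suppose products 1,…,n are indexed so that r_1λ_1/(1−c_1) > r_2λ_2/(1−c_2) > ⋯ > r_nλ_n/(1−c_n), with c_j ∈ [0,1). Let H_k^{n−k+1} be the maximum of R(σ, n−k+1) over rankings σ of all products {k, k+1, …, n}. Then for all 1 ≤ k ≤ n, r_k λ_k / (1 − c_k) ≥ H_k^{n−k+1}. -/
noncomputable def revM (lam r c : ℕ → ℝ) (σ : ℕ → ℕ) (x : ℕ) : ℝ :=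
  ∑ k ∈ Finset.range x, (∏ i ∈ Finset.range k, c (σ i)) * (lam (σ k) * r (σ k))

/-- In the multiple-purchase model with products indexed by strictly descending
`rλ/(1-c)`, the optimal revenue `H_k^{n-k+1}` from ranking all products `{k,…,n}`
is at most `r_k λ_k / (1 - c_k)`. -/
theorem stmt12 (n k : ℕ) (lam r c : ℕ → ℝ)
    (hk1 : 1 ≤ k) (hkn : k ≤ n)
    (hlam : ∀ j ∈ Finset.Icc 1 n, 0 < lam j ∧ lam j ≤ 1)
    (hr : ∀ j ∈ Finset.Icc 1 n, 0 < r j)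
    (hc : ∀ j ∈ Finset.Icc 1 n, 0 ≤ c j ∧ c j < 1)
    (hdesc : ∀ j, 1 ≤ j → j < n →
      r (j + 1) * lam (j + 1) / (1 - c (j + 1)) < r j * lam j / (1 - c j))
    (H : ℝ)
    (hH : IsGreatest {v | ∃ σ : ℕ → ℕ, Set.InjOn σ (Set.Iio (n - k + 1)) ∧
      (∀ i < n - k + 1, σ i ∈ Finset.Icc k n) ∧ v = revM lam r c σ (n - k + 1)} H) :
    r k * lam k / (1 - c k) ≥ H := by
  set M := r k * lam k / (1 - c k) with hM
  have hsub : ∀ j ∈ Finset.Icc k n, j ∈ Finset.Icc 1 n := by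
    intro j hj
    simp only [Finset.mem_Icc] at hj ⊢
    exact ⟨le_trans hk1 hj.1, hj.2⟩
  -- monotonicity: for k ≤ j ≤ n, ratio j ≤ ratio k
  have hmono : ∀ j, k ≤ j → j ≤ n → r j * lam j / (1 - c j) ≤ M := by
    intro j hkj
    induction j, hkj using Nat.le_induction with
    | base => intro _; exact le_refl _
    | succ j hj ih =>
      intro hjn
      have h1 : (1:ℕ) ≤ j := le_trans hk1 hj
      have h2 : j < n := lt_of_lt_of_le (Nat.lt_succ_self j) hjn
      exact le_trans (le_of_lt (hdesc j h1 h2)) (ih (le_of_lt h2))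
  have hkIcc : k ∈ Finset.Icc 1 n := Finset.mem_Icc.mpr ⟨hk1, hkn⟩
  have hMpos : 0 < M := by
    have := (hlam k hkIcc).1
    have := hr k hkIcc
    have := (hc k hkIcc).2
    apply div_pos (by positivity) (by linarith)
  obtain ⟨⟨σ, _, hσmem, hv⟩, _⟩ := hH
  rw [hv]
  set x := n - k + 1
  -- termwise bound and telescoping
  have key : revM lam r c σ x ≤
      ∑ j ∈ Finset.range x,
        (M * (∏ i ∈ Finset.range j, c (σ i)) - M * (∏ i ∈ Finset.range (j+1), c (σ i))) := by
    apply Finset.sum_le_sum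
    intro j hj
    have hjx : j < x := Finset.mem_range.mp hj
    have hmem := hσmem j hjx
    have hmem1 := hsub _ hmem
    have hc1 := hc _ hmem1
    have hkj := Finset.mem_Icc.mp hmem
    have hratio : r (σ j) * lam (σ j) / (1 - c (σ j)) ≤ M := hmono _ hkj.1 hkj.2
    have hcpos : 0 < 1 - c (σ j) := by linarith [hc1.2]
    have hb : lam (σ j) * r (σ j) ≤ M * (1 - c (σ j)) := by
      have := (div_le_iff₀ hcpos).mp hratio
      nlinarith
    have hPnn : 0 ≤ ∏ i ∈ Finset.range j, c (σ i) := by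
      apply Finset.prod_nonneg
      intro i hi
      exact (hc _ (hsub _ (hσmem i (lt_trans (Finset.mem_range.mp hi) hjx)))).1
    rw [Finset.prod_range_succ]
    calc (∏ i ∈ Finset.range j, c (σ i)) * (lam (σ j) * r (σ j))
        ≤ (∏ i ∈ Finset.range j, c (σ i)) * (M * (1 - c (σ j))) :=
          mul_le_mul_of_nonneg_left hb hPnn
      _ = M * (∏ i ∈ Finset.range j, c (σ i))
            - M * ((∏ i ∈ Finset.range j, c (σ i)) * c (σ j)) := by ring
  have htel : ∑ j ∈ Finset.range x,
      (M * (∏ i ∈ Finset.range j, c (σ i)) - M * (∏ i ∈ Finset.range (j+1), c (σ i)))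
      = M * 1 - M * (∏ i ∈ Finset.range x, c (σ i)) := by
    have := Finset.sum_range_sub' (fun j => M * (∏ i ∈ Finset.range j, c (σ i))) x
    simpa using this
  have hPnn : 0 ≤ ∏ i ∈ Finset.range x, c (σ i) := by
    apply Finset.prod_nonneg
    intro i hi
    exact (hc _ (hsub _ (hσmem i (Finset.mem_range.mp hi)))).1
  have : revM lam r c σ x ≤ M := by
    refine le_trans key ?_
    rw [htel]
    nlinarith
  linarith
end

section
/- Let λ : {1,…,n} → (0,1], r : {1,…,n} → (0,∞), and for j ≤ n and 0 ≤ k define H_j^k by the dynamic programming recursion H_j^0 = 0, H_{n+1}^k = 0, and H_j^k = max(λ_j r_j + (1−λ_j) H_{j+1}^{k−1}, H_{j+1}^k). Then H_j^x equals the maximum of R(σ, x) over all rankings σ consisting of x products from {j,…,n} displayed in increasing index order, where R(σ, x) = Σ_{k=1}^{x} Π_{i=1}^{k−1}(1−λ_{σ(i)}) λ_{σ(k)} r_{σ(k)}. -/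
noncomputable def rev (lam r : ℕ → ℝ) (σ : ℕ → ℕ) (x : ℕ) : ℝ :=
  ∑ k ∈ Finset.range x, (∏ i ∈ Finset.range k, (1 - lam (σ i))) * (lam (σ k) * r (σ k))

/-- Dynamic programming value function:
`H_j^0 = 0`, `H_{n+1}^k = 0`, `H_j^k = max(λ_j r_j + (1-λ_j) H_{j+1}^{k-1}, H_{j+1}^k)`. -/
noncomputable def Hdp (lam r : ℕ → ℝ) (n j k : ℕ) : ℝ :=
  if h : n + 1 ≤ j ∨ k = 0 then 0
  else max (lam j * r j + (1 - lam j) * Hdp lam r n (j + 1) (k - 1))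
    (Hdp lam r n (j + 1) k)
termination_by n + 1 - j
decreasing_by all_goals omega

lemma Hdp_zero (lam r : ℕ → ℝ) (n j : ℕ) : Hdp lam r n j 0 = 0 := by
  rw [Hdp]; simp

lemma Hdp_top (lam r : ℕ → ℝ) (n j k : ℕ) (hj : n + 1 ≤ j) : Hdp lam r n j k = 0 := by
  rw [Hdp]; rw [dif_pos (Or.inl hj)]

lemma Hdp_rec (lam r : ℕ → ℝ) (n j k : ℕ) (hj : j ≤ n) (hk : 1 ≤ k) :
    Hdp lam r n j k = max (lam j * r j + (1 - lam j) * Hdp lam r n (j+1) (k-1))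
      (Hdp lam r n (j+1) k) := by
  rw [Hdp]; rw [dif_neg (by omega)]

lemma rev_cons (lam r : ℕ → ℝ) (σ : ℕ → ℕ) (x : ℕ) :
    rev lam r σ (x+1)
      = lam (σ 0) * r (σ 0) + (1 - lam (σ 0)) * rev lam r (fun i => σ (i+1)) x := by
  unfold rev
  rw [Finset.sum_range_succ', Finset.mul_sum]
  simp only [Finset.prod_range_zero, one_mul]
  rw [add_comm]
  congr 1
  apply Finset.sum_congr rfl
  intro k _
  rw [Finset.prod_range_succ']
  ring

lemma Hdp_stab (lam r : ℕ → ℝ) (n : ℕ) :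
    ∀ d j k, n + 1 - j ≤ d → n + 1 - j ≤ k → Hdp lam r n j (k+1) = Hdp lam r n j k := by
  intro d
  induction d with
  | zero =>
    intro j k hd hk
    rw [Hdp_top lam r n j _ (by omega), Hdp_top lam r n j _ (by omega)]
  | succ d ih =>
    intro j k hd hk
    by_cases hj : n + 1 ≤ j
    · rw [Hdp_top lam r n j _ hj, Hdp_top lam r n j _ hj]
    · have hjn : j ≤ n := by omega
      have hk1 : 1 ≤ k := by omega
      rw [Hdp_rec lam r n j (k+1) hjn (by omega), Hdp_rec lam r n j k hjn hk1]
      have e1 : Hdp lam r n (j+1) k = Hdp lam r n (j+1) (k-1) := by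
        have := ih (j+1) (k-1) (by omega) (by omega)
        have hkk : k - 1 + 1 = k := by omega
        rw [hkk] at this
        exact this
      have e2 : Hdp lam r n (j+1) (k+1) = Hdp lam r n (j+1) k :=
        ih (j+1) k (by omega) (by omega)
      simp only [Nat.add_sub_cancel, e1, e2]

lemma Hdp_le_r (lam r : ℕ → ℝ) (n : ℕ)
    (hlam : ∀ p ∈ Finset.Icc 1 n, 0 < lam p ∧ lam p ≤ 1)
    (hr : ∀ p ∈ Finset.Icc 1 n, 0 < r p)
    (hrdesc : ∀ i, 1 ≤ i → i < n → r (i + 1) ≤ r i) :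
    ∀ d j k, n + 1 - j ≤ d → 1 ≤ j → j ≤ n → Hdp lam r n j k ≤ r j := by
  intro d
  induction d with
  | zero => intro j k hd hj hjn; omega
  | succ d ih =>
    intro j k hd hj hjn
    have hrj : 0 < r j := hr j (Finset.mem_Icc.mpr ⟨hj, hjn⟩)
    rcases Nat.eq_zero_or_pos k with hk | hk
    · rw [hk, Hdp_zero]; linarith
    · rw [Hdp_rec lam r n j k hjn hk]
      have hlamj := hlam j (Finset.mem_Icc.mpr ⟨hj, hjn⟩)
      have hnext : ∀ m, Hdp lam r n (j+1) m ≤ r j := by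
        intro m
        by_cases hjn' : j + 1 ≤ n
        · have h1 := ih (j+1) m (by omega) (by omega) hjn'
          have h2 := hrdesc j hj (by omega)
          linarith
        · rw [Hdp_top lam r n (j+1) m (by omega)]; linarith
      apply max_le
      · have h1 := hnext (k-1)
        nlinarith [hlamj.1, hlamj.2]
      · exact hnext k

lemma rev_le_Hdp (lam r : ℕ → ℝ) (n : ℕ)
    (hlam : ∀ p ∈ Finset.Icc 1 n, 0 < lam p ∧ lam p ≤ 1) :
    ∀ d j x (σ : ℕ → ℕ), n + 1 - j ≤ d → 1 ≤ j → StrictMonoOn σ (Set.Iio x) →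
      (∀ i < x, σ i ∈ Finset.Icc j n) → rev lam r σ x ≤ Hdp lam r n j x := by
  intro d
  induction d with
  | zero =>
    intro j x σ hd hj hmono hmem
    rcases Nat.eq_zero_or_pos x with hx | hx
    · simp [hx, rev, Hdp_zero]
    · have := hmem 0 hx
      rw [Finset.mem_Icc] at this
      omega
  | succ d ih =>
    intro j x σ hd hj hmono hmem
    rcases Nat.eq_zero_or_pos x with hx | hx
    · simp [hx, rev, Hdp_zero]
    · obtain ⟨m, rfl⟩ : ∃ m, x = m + 1 := ⟨x - 1, by omega⟩
      have h0 := hmem 0 (by omega)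
      rw [Finset.mem_Icc] at h0
      have hjn : j ≤ n := by omega
      rw [Hdp_rec lam r n j (m+1) hjn (by omega), rev_cons]
      rcases eq_or_lt_of_le h0.1 with he | hlt
      · -- σ 0 = j
        have hσ0 : σ 0 = j := he.symm
        have hmono' : StrictMonoOn (fun i => σ (i+1)) (Set.Iio m) := by
          intro a ha b hb hab
          exact hmono (by simp at ha ⊢; omega) (by simp at hb ⊢; omega) (by omega)
        have hmem' : ∀ i < m, σ (i+1) ∈ Finset.Icc (j+1) n := by
          intro i hi
          have h1 := hmem (i+1) (by omega)
          rw [Finset.mem_Icc] at h1 ⊢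
          have : σ 0 < σ (i+1) := hmono (by simp) (by simp; omega) (by omega)
          omega
        have hrec := ih (j+1) m (fun i => σ (i+1)) (by omega) (by omega) hmono' hmem'
        have hlamj := hlam j (Finset.mem_Icc.mpr ⟨hj, hjn⟩)
        refine le_trans ?_ (le_max_left _ _)
        rw [hσ0]
        simp only [Nat.add_sub_cancel]
        nlinarith [hlamj.2]
      · -- σ 0 > j
        have hmem' : ∀ i < m + 1, σ i ∈ Finset.Icc (j+1) n := by
          intro i hi
          have h1 := hmem i hi
          rw [Finset.mem_Icc] at h1 ⊢
          rcases Nat.eq_zero_or_pos i with h | h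
          · subst h; omega
          · have : σ 0 < σ i := hmono (by simp) (by simpa using hi) h
            omega
        have hrec := ih (j+1) (m+1) σ (by omega) (by omega) hmono hmem'
        rw [← rev_cons]
        exact le_trans hrec (le_max_right _ _)

lemma Hdp_mem (lam r : ℕ → ℝ) (n : ℕ)
    (hlam : ∀ p ∈ Finset.Icc 1 n, 0 < lam p ∧ lam p ≤ 1)
    (hr : ∀ p ∈ Finset.Icc 1 n, 0 < r p)
    (hrdesc : ∀ i, 1 ≤ i → i < n → r (i + 1) ≤ r i) :
    ∀ d j x, n + 1 - j ≤ d → 1 ≤ j → j ≤ n → 1 ≤ x → x ≤ n - j + 1 →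
      ∃ σ : ℕ → ℕ, StrictMonoOn σ (Set.Iio x) ∧ (∀ i < x, σ i ∈ Finset.Icc j n) ∧
        rev lam r σ x = Hdp lam r n j x := by
  intro d
  induction d with
  | zero => intro j x hd hj hjn hx hxn; omega
  | succ d ih =>
    intro j x hd hj hjn hx hxn
    obtain ⟨m, rfl⟩ : ∃ m, x = m + 1 := ⟨x - 1, by omega⟩
    have hlamj := hlam j (Finset.mem_Icc.mpr ⟨hj, hjn⟩)
    have hrj : 0 < r j := hr j (Finset.mem_Icc.mpr ⟨hj, hjn⟩)
    rw [Hdp_rec lam r n j (m+1) hjn (by omega)]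
    simp only [Nat.add_sub_cancel]
    set T := lam j * r j + (1 - lam j) * Hdp lam r n (j+1) m with hT
    set K := Hdp lam r n (j+1) (m+1) with hK
    by_cases hTK : K ≤ T
    · -- take product j
      rw [max_eq_left hTK]
      rcases Nat.eq_zero_or_pos m with hm | hm
      · subst hm
        refine ⟨fun _ => j, ?_, ?_, ?_⟩
        · intro a ha b hb hab; simp at ha hb; omega
        · intro i hi; exact Finset.mem_Icc.mpr ⟨le_refl j, hjn⟩
        · rw [hT, Hdp_zero]
          simp [rev]
      · have hjn' : j + 1 ≤ n := by omega
        obtain ⟨σ', hmono', hmem', hval'⟩ :=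
          ih (j+1) m (by omega) (by omega) hjn' hm (by omega)
        refine ⟨fun i => if i = 0 then j else σ' (i-1), ?_, ?_, ?_⟩
        · intro a ha b hb hab
          simp only [Set.mem_Iio] at ha hb
          rcases Nat.eq_zero_or_pos a with h | h
          · subst h
            have hb1 : b - 1 < m := by omega
            have := Finset.mem_Icc.mp (hmem' (b-1) hb1)
            have e1 : (if (0:ℕ) = 0 then j else σ' (0-1)) = j := if_pos rfl
            have e2 : (if b = 0 then j else σ' (b-1)) = σ' (b-1) := if_neg (by omega)
            simp only [reduceIte, e2]; omega
          · have hab1 : a - 1 < b - 1 := by omega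
            have := hmono' (by simp; omega) (by simp; omega) hab1
            simp only [if_neg (by omega : ¬ a = 0), if_neg (by omega : ¬ b = 0)]
            omega
        · intro i hi
          rcases Nat.eq_zero_or_pos i with h | h
          · subst h; simpa using Finset.mem_Icc.mpr ⟨le_refl j, hjn⟩
          · have := Finset.mem_Icc.mp (hmem' (i-1) (by omega))
            simp only [if_neg (by omega : ¬ i = 0)]
            exact Finset.mem_Icc.mpr ⟨by omega, this.2⟩
        · rw [rev_cons]
          have e1 : (if (0:ℕ) = 0 then j else σ' (0-1)) = j := if_pos rfl
          simp only [reduceIte]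
          have heq' : (fun i => (fun k => if k = 0 then j else σ' (k-1)) (i+1)) = σ' := by
            funext i; simp
          rw [heq', hval', hT]
    · -- skip product j
      push_neg at hTK
      have hxle : m + 1 ≤ n - j := by
        by_contra hcon
        have hm : m = n - j := by omega
        have hstab : K = Hdp lam r n (j+1) m := by
          rw [hK]
          exact Hdp_stab lam r n (n+1) (j+1) m (by omega) (by omega)
        have hHle : Hdp lam r n (j+1) m ≤ r j := by
          by_cases hjn' : j + 1 ≤ n
          · have h1 := Hdp_le_r lam r n hlam hr hrdesc (n+1) (j+1) m (by omega) (by omega) hjn'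
            have h2 := hrdesc j hj (by omega)
            linarith
          · rw [Hdp_top lam r n (j+1) m (by omega)]; linarith
        rw [hstab] at hTK
        rw [hT] at hTK
        nlinarith [hlamj.1]
      have hjn' : j + 1 ≤ n := by omega
      obtain ⟨σ, hmono, hmem, hval⟩ :=
        ih (j+1) (m+1) (by omega) (by omega) hjn' (by omega) (by omega)
      rw [max_eq_right (le_of_lt hTK)]
      refine ⟨σ, hmono, ?_, by rw [hval, hK]⟩
      intro i hi
      have := Finset.mem_Icc.mp (hmem i hi)
      exact Finset.mem_Icc.mpr ⟨by omega, this.2⟩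

/-- The DP value `H_j^x` is the maximum of `R(σ,x)` over rankings of `x` products from
`{j,…,n}` displayed in increasing index order. -/
theorem stmt16 (n j x : ℕ) (lam r : ℕ → ℝ)
    (hlam : ∀ p ∈ Finset.Icc 1 n, 0 < lam p ∧ lam p ≤ 1)
    (hr : ∀ p ∈ Finset.Icc 1 n, 0 < r p)
    (hrdesc : ∀ i, 1 ≤ i → i < n → r (i + 1) ≤ r i)
    (hj : 1 ≤ j) (hjn : j ≤ n) (hx : 1 ≤ x) (hxn : x ≤ n - j + 1) :
    IsGreatest {v | ∃ σ : ℕ → ℕ, StrictMonoOn σ (Set.Iio x) ∧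
      (∀ i < x, σ i ∈ Finset.Icc j n) ∧ v = rev lam r σ x} (Hdp lam r n j x) := by
  constructor
  · obtain ⟨σ, h1, h2, h3⟩ :=
      Hdp_mem lam r n hlam hr hrdesc (n+1-j) j x (le_refl _) hj hjn hx hxn
    exact ⟨σ, h1, h2, h3.symm⟩
  · rintro v ⟨σ, h1, h2, rfl⟩
    exact rev_le_Hdp lam r n hlam (n+1-j) j x σ (le_refl _) hj h1 h2
end

section
/- Let u, λ ∈ [0,1]^M with u_k ≥ λ_k for all k, and h^L, h* ∈ [0,1]^M with h^L_k ≤ h*_k for all k. Define G^U_k = Π_{i=1}^{k−1}(1 − h^L_i) and G*_k = Π_{i=1}^{k−1}(1 − h*_i). Then for any r ∈ [0, r_max]^M, Σ_{k=1}^{M} ( Π_{i=1}^{k−1}(1−u_i) · u_k · G^U_k − Π_{i=1}^{k−1}(1−λ_i) · λ_k · G*_k ) r_k ≤ r_max · Σ_{k=1}^{M} ( Π_{i=1}^{k−1}(1−λ_i)(1−h*_i) ) · ( (h*_k − h^L_k) + (u_k − λ_k) ). -/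
open Finset

private lemma tele17 (M : ℕ) (c u : ℕ → ℝ) (hc : ∀ k, 0 ≤ c k) (hcu : ∀ k, c k ≤ 1 - u k) :
    ∑ k ∈ range M, (∏ i ∈ range k, c i) * u k + ∏ i ∈ range M, c i ≤ 1 := by
  induction M with
  | zero => simp
  | succ M ih =>
    rw [Finset.sum_range_succ, Finset.prod_range_succ]
    have hP : 0 ≤ ∏ i ∈ range M, c i := Finset.prod_nonneg fun i _ => hc i
    have h2 : (∏ i ∈ range M, c i) * (u M + c M) ≤ (∏ i ∈ range M, c i) * 1 :=
      mul_le_mul_of_nonneg_left (by linarith [hcu M]) hP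
    nlinarith

private lemma core17 (rmax : ℝ) (hrm : 0 ≤ rmax) :
    ∀ (M : ℕ) (c d e u r : ℕ → ℝ),
      (∀ k, 0 ≤ c k) → (∀ k, c k ≤ 1 - u k) →
      (∀ k, 0 ≤ d k) → (∀ k, d k ≤ 1) →
      (∀ k, 0 ≤ u k) →
      (∀ k, 0 ≤ r k) → (∀ k, r k ≤ rmax) →
      (∀ k, c k - d k ≤ e k) → (∀ k, 0 ≤ e k) →
      ∑ k ∈ range M, (∏ i ∈ range k, c i - ∏ i ∈ range k, d i) * (u k * r k)
        ≤ rmax * ∑ k ∈ range M, (∏ i ∈ range k, d i) * e k := by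
  intro M
  induction M with
  | zero => intro _ _ _ _ _ _ _ _ _ _ _ _ _ _; simp
  | succ M ih =>
    intro c d e u r hc hcu hd hd1 hu hr hrmax hcd he
    have L : ∑ k ∈ range (M + 1), (∏ i ∈ range k, c i - ∏ i ∈ range k, d i) * (u k * r k)
        = ∑ k ∈ range M, ((∏ i ∈ range k, c (i + 1)) * c 0 - (∏ i ∈ range k, d (i + 1)) * d 0)
            * (u (k + 1) * r (k + 1)) := by
      rw [Finset.sum_range_succ']
      simp [Finset.prod_range_succ']
    have L2 : ∑ k ∈ range M, ((∏ i ∈ range k, c (i + 1)) * c 0 - (∏ i ∈ range k, d (i + 1)) * d 0)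
            * (u (k + 1) * r (k + 1))
        = d 0 * ∑ k ∈ range M, (∏ i ∈ range k, c (i + 1) - ∏ i ∈ range k, d (i + 1))
            * (u (k + 1) * r (k + 1))
          + (c 0 - d 0) * ∑ k ∈ range M, (∏ i ∈ range k, c (i + 1)) * (u (k + 1) * r (k + 1)) := by
      rw [Finset.mul_sum, Finset.mul_sum, ← Finset.sum_add_distrib]
      apply Finset.sum_congr rfl
      intros; ring
    set S1 := ∑ k ∈ range M, (∏ i ∈ range k, c (i + 1) - ∏ i ∈ range k, d (i + 1))
        * (u (k + 1) * r (k + 1)) with hS1def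
    set S2 := ∑ k ∈ range M, (∏ i ∈ range k, c (i + 1)) * (u (k + 1) * r (k + 1)) with hS2def
    set T := ∑ k ∈ range M, (∏ i ∈ range k, d (i + 1)) * e (k + 1) with hTdef
    have hS1 : S1 ≤ rmax * T :=
      ih _ _ _ _ _ (fun k => hc _) (fun k => hcu _) (fun k => hd _) (fun k => hd1 _)
        (fun k => hu _) (fun k => hr _) (fun k => hrmax _) (fun k => hcd _) (fun k => he _)
    have hS2a : 0 ≤ S2 := by
      apply Finset.sum_nonneg
      intro k _
      exact mul_nonneg (Finset.prod_nonneg fun i _ => hc _) (mul_nonneg (hu _) (hr _))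
    have hS2b : S2 ≤ rmax := by
      have ht := tele17 M (fun i => c (i + 1)) (fun i => u (i + 1)) (fun k => hc _) (fun k => hcu _)
      have hPn : (0:ℝ) ≤ ∏ i ∈ range M, c (i + 1) := Finset.prod_nonneg fun i _ => hc _
      have hsum : ∑ k ∈ range M, (∏ i ∈ range k, c (i + 1)) * u (k + 1) ≤ 1 := by linarith
      have step : S2 ≤ ∑ k ∈ range M, ((∏ i ∈ range k, c (i + 1)) * u (k + 1)) * rmax := by
        apply Finset.sum_le_sum
        intro k _
        have hCn : (0:ℝ) ≤ ∏ i ∈ range k, c (i + 1) := Finset.prod_nonneg fun i _ => hc _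
        have := mul_le_mul_of_nonneg_left (hrmax (k + 1)) (mul_nonneg hCn (hu (k + 1)))
        nlinarith
      calc S2 ≤ ∑ k ∈ range M, ((∏ i ∈ range k, c (i + 1)) * u (k + 1)) * rmax := step
        _ = (∑ k ∈ range M, (∏ i ∈ range k, c (i + 1)) * u (k + 1)) * rmax := by
            rw [Finset.sum_mul]
        _ ≤ 1 * rmax := mul_le_mul_of_nonneg_right hsum hrm
        _ = rmax := one_mul rmax
    have hB : (c 0 - d 0) * S2 ≤ rmax * e 0 := by
      have h1 : 0 ≤ (e 0 - (c 0 - d 0)) * S2 := mul_nonneg (by linarith [hcd 0]) hS2a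
      have h2 : 0 ≤ e 0 * (rmax - S2) := mul_nonneg (he 0) (by linarith)
      nlinarith
    have R : rmax * ∑ k ∈ range (M + 1), (∏ i ∈ range k, d i) * e k
        = rmax * (d 0 * T + e 0) := by
      rw [Finset.sum_range_succ']
      simp only [Finset.prod_range_succ', Finset.prod_range_zero, one_mul]
      rw [hTdef, Finset.mul_sum]
      congr 1
      congr 1
      apply Finset.sum_congr rfl
      intros; ring
    rw [L, L2, R]
    have hA : d 0 * S1 ≤ d 0 * (rmax * T) := mul_le_mul_of_nonneg_left hS1 (hd 0)
    nlinarith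

/-- Error decomposition for RankUCB: the revenue gap between the optimistic model
`(u, h^L)` and the true model `(λ, h*)` is bounded by the per-position estimation
errors weighted by the reach probabilities of the true process. -/
theorem stmt17 (M : ℕ) (rmax : ℝ) (u lam hL hstar r : ℕ → ℝ)
    (hlam0 : ∀ k, 0 ≤ lam k) (hlu : ∀ k, lam k ≤ u k) (hu1 : ∀ k, u k ≤ 1)
    (hhL0 : ∀ k, 0 ≤ hL k) (hLs : ∀ k, hL k ≤ hstar k) (hs1 : ∀ k, hstar k ≤ 1)
    (hr0 : ∀ k, 0 ≤ r k) (hrmax : ∀ k, r k ≤ rmax) :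
    ∑ k ∈ Finset.range M,
        ((∏ i ∈ Finset.range k, (1 - u i)) * u k * (∏ i ∈ Finset.range k, (1 - hL i))
          - (∏ i ∈ Finset.range k, (1 - lam i)) * lam k * (∏ i ∈ Finset.range k, (1 - hstar i)))
          * r k
      ≤ rmax * ∑ k ∈ Finset.range M,
          (∏ i ∈ Finset.range k, (1 - lam i) * (1 - hstar i))
            * ((hstar k - hL k) + (u k - lam k)) := by
  have hrm : (0:ℝ) ≤ rmax := le_trans (hr0 0) (hrmax 0)
  have hhL1 : ∀ k, hL k ≤ 1 := fun k => le_trans (hLs k) (hs1 k)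
  have hs0 : ∀ k, 0 ≤ hstar k := fun k => le_trans (hhL0 k) (hLs k)
  have hu0 : ∀ k, 0 ≤ u k := fun k => le_trans (hlam0 k) (hlu k)
  have hlam1 : ∀ k, lam k ≤ 1 := fun k => le_trans (hlu k) (hu1 k)
  have split : ∀ k ∈ Finset.range M,
      ((∏ i ∈ Finset.range k, (1 - u i)) * u k * (∏ i ∈ Finset.range k, (1 - hL i))
          - (∏ i ∈ Finset.range k, (1 - lam i)) * lam k * (∏ i ∈ Finset.range k, (1 - hstar i)))
          * r k
        = (∏ i ∈ Finset.range k, (1 - lam i) * (1 - hstar i)) * ((u k - lam k) * r k)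
          + (∏ i ∈ Finset.range k, (1 - u i) * (1 - hL i)
              - ∏ i ∈ Finset.range k, (1 - lam i) * (1 - hstar i)) * (u k * r k) := by
    intro k _
    rw [Finset.prod_mul_distrib, Finset.prod_mul_distrib]
    ring
  rw [Finset.sum_congr rfl split, Finset.sum_add_distrib]
  have hBd : ∑ k ∈ Finset.range M,
      (∏ i ∈ Finset.range k, (1 - u i) * (1 - hL i)
        - ∏ i ∈ Finset.range k, (1 - lam i) * (1 - hstar i)) * (u k * r k)
      ≤ rmax * ∑ k ∈ Finset.range M,
          (∏ i ∈ Finset.range k, (1 - lam i) * (1 - hstar i)) * (hstar k - hL k) := by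
    apply core17 rmax hrm M _ _ _ u r
    · intro k; exact mul_nonneg (by linarith [hu1 k]) (by linarith [hhL1 k])
    · intro k; nlinarith [hu1 k, hhL0 k, hhL1 k]
    · intro k; exact mul_nonneg (by linarith [hlam1 k]) (by linarith [hs1 k])
    · intro k; nlinarith [hlam0 k, hlam1 k, hs0 k, hs1 k]
    · exact hu0
    · exact hr0
    · exact hrmax
    · intro k; nlinarith [hlu k, hu1 k, hhL0 k, hLs k, hs1 k, hlam0 k, hlam1 k]
    · intro k; linarith [hLs k]
  have hAd : ∑ k ∈ Finset.range M,
      (∏ i ∈ Finset.range k, (1 - lam i) * (1 - hstar i)) * ((u k - lam k) * r k)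
      ≤ rmax * ∑ k ∈ Finset.range M,
          (∏ i ∈ Finset.range k, (1 - lam i) * (1 - hstar i)) * (u k - lam k) := by
    rw [Finset.mul_sum]
    apply Finset.sum_le_sum
    intro k _
    have hDn : (0:ℝ) ≤ ∏ i ∈ Finset.range k, (1 - lam i) * (1 - hstar i) :=
      Finset.prod_nonneg fun i _ => mul_nonneg (by linarith [hlam1 i]) (by linarith [hs1 i])
    have h1 : 0 ≤ (∏ i ∈ Finset.range k, (1 - lam i) * (1 - hstar i)) * (u k - lam k) :=
      mul_nonneg hDn (by linarith [hlu k])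
    nlinarith [hrmax k, hr0 k]
  have hRHS : rmax * ∑ k ∈ Finset.range M,
      (∏ i ∈ Finset.range k, (1 - lam i) * (1 - hstar i))
        * ((hstar k - hL k) + (u k - lam k))
      = rmax * ∑ k ∈ Finset.range M,
          (∏ i ∈ Finset.range k, (1 - lam i) * (1 - hstar i)) * (hstar k - hL k)
        + rmax * ∑ k ∈ Finset.range M,
          (∏ i ∈ Finset.range k, (1 - lam i) * (1 - hstar i)) * (u k - lam k) := by
    rw [Finset.mul_sum, Finset.mul_sum, Finset.mul_sum, ← Finset.sum_add_distrib]
    apply Finset.sum_congr rfl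
    intros; ring
  linarith
end
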